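/- Let k be a finite field of cardinality q^n, let F ⊆ k[X] be finite, and set E = F̄_f ⊆ S. Let h_2 ∈ k[X] with deg(h_2) = d > 0, let u = (q−1)⌈log_q(d) + 1⌉ + 1, and assume overline{h_2} ∈ V_{E,u}. For e ∈ ℕ let r_e = X^e mod h_2 be the remainder of division of X^e by h_2. Then for every e ∈ ℕ, overline{X^e} − overline{r_e} ∈ V_{E, max{w(e), u}}; in particular, if w(e) ≤ u then overline{X^e} − overline{r_e} ∈ V_{E,u}. -/

import Mathlib

open MvPolynomial

/-- `V_{E,d}`: the smallest `k`-subspace of the polynomial ring containing every `f ∈ E`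
of total degree at most `d` and closed under multiplication by ring elements
as long as the degree stays at most `d`. -/
noncomputable def Vspace {k : Type*} [Field k] {σ : Type*} (E : Finset (MvPolynomial σ k)) (d : ℕ) :
    Submodule k (MvPolynomial σ k) :=
  sInf {W | (∀ f ∈ E, f.totalDegree ≤ d → f ∈ W) ∧
            ∀ g ∈ W, ∀ h : MvPolynomial σ k, (g * h).totalDegree ≤ d → g * h ∈ W}

/-- The reduced exponent `e'` determined by `X^{e'} = X^e mod (X^{q^n} - X)`:
`e' = e` if `e < q^n`, and otherwise `e'` is the representative of `e` modulo `q^n - 1`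
lying in `{1, …, q^n - 1}`. -/
def reduceExp (q n e : ℕ) : ℕ :=
  if e < q ^ n then e
  else if (q ^ n - 1) ∣ e then q ^ n - 1 else e % (q ^ n - 1)

/-- The exponent vector of `overline{X^e}`: the base-`q` digits of the reduced exponent. -/
noncomputable def expVec (q n e : ℕ) : Fin n →₀ ℕ :=
  Finsupp.equivFunOnFinite.symm fun j : Fin n => reduceExp q n e / q ^ (j : ℕ) % q

/-- The fake Weil descent map `f ↦ f̄` from `k[X]` to `k[X_0, …, X_{n-1}]`, the `k`-linear
extension of `X^e ↦ overline{X^e} = X_0^{e'_0} ⋯ X_{n-1}^{e'_{n-1}}`. -/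
noncomputable def fakeWeil {k : Type*} [Field k] (q n : ℕ) (f : Polynomial k) :
    MvPolynomial (Fin n) k :=
  f.sum fun e c => MvPolynomial.monomial (expVec q n e) c

/-- The fake Weil descent system `F̄_f` of a finite set `F ⊆ k[X]`:
`{f̄ : f ∈ F} ∪ {X_0^q - X_1, …, X_{n-2}^q - X_{n-1}, X_{n-1}^q - X_0}`. -/
noncomputable def fakeWeilSystem {k : Type*} [Field k] [DecidableEq k] (q n : ℕ) [NeZero n]
    (F : Finset (Polynomial k)) : Finset (MvPolynomial (Fin n) k) :=
  F.image (fakeWeil q n) ∪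
    Finset.image (fun i : Fin n => X i ^ q - X (i + 1)) Finset.univ

/-- The weight of a natural number: its digit sum in base `q`. -/
def wNat (q e : ℕ) : ℕ := (Nat.digits q e).sum

/-- The weight of a univariate polynomial: the maximal weight of an exponent appearing in it. -/
def wPoly {k : Type*} [Field k] (q : ℕ) (f : Polynomial k) : ℕ :=
  f.support.sup fun e => wNat q e

namespace FWP

/-! ### weight of naturals -/

lemma wNat_zero (q : ℕ) : wNat q 0 = 0 := by simp [wNat]

lemma wNat_rec {q : ℕ} (hq : 2 ≤ q) (x : ℕ) : wNat q x = x % q + wNat q (x / q) := by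
  rcases Nat.eq_zero_or_pos x with h | h
  · subst h; simp [wNat]
  · unfold wNat
    rw [Nat.digits_def' (by omega : 1 < q) h, List.sum_cons]

lemma wNat_one {q : ℕ} (hq : 2 ≤ q) : wNat q 1 = 1 := by
  rw [wNat_rec hq, Nat.mod_eq_of_lt (by omega), Nat.div_eq_of_lt (by omega), wNat_zero]

lemma wNat_add_le {q : ℕ} (hq : 2 ≤ q) :
    ∀ N a b, a + b ≤ N → wNat q (a + b) ≤ wNat q a + wNat q b := by
  intro N
  induction N using Nat.strong_induction_on with
  | _ N IH =>
    intro a b hab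
    rcases Nat.eq_zero_or_pos (a + b) with h0 | h0
    · have ha : a = 0 := by omega
      have hb : b = 0 := by omega
      simp [ha, hb, wNat_zero]
    have hq0 : 0 < q := by omega
    have hma : a % q < q := Nat.mod_lt a hq0
    have hmb : b % q < q := Nat.mod_lt b hq0
    have hmla := Nat.mod_le a q
    have hmlb := Nat.mod_le b q
    have ha' := Nat.div_add_mod a q
    have hb' := Nat.div_add_mod b q
    have hkey : a + b = q * (a / q + b / q) + (a % q + b % q) := by
      rw [Nat.mul_add]; omega
    rw [wNat_rec hq (a + b), wNat_rec hq a, wNat_rec hq b]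
    by_cases hc : a % q + b % q < q
    · have hmod : (a + b) % q = a % q + b % q := by
        rw [hkey, Nat.mul_add_mod, Nat.mod_eq_of_lt hc]
      have hdiv : (a + b) / q = a / q + b / q := by
        rw [hkey, Nat.mul_add_div hq0, Nat.div_eq_of_lt hc, Nat.add_zero]
      rw [hmod, hdiv]
      have hlt : a / q + b / q < a + b := by
        rcases Nat.eq_zero_or_pos a with ha | ha
        · have hbpos : 0 < b := by omega
          have := Nat.div_lt_self hbpos (by omega : 1 < q)
          have := Nat.div_le_self a q
          omega
        · have := Nat.div_lt_self ha (by omega : 1 < q)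
          have := Nat.div_le_self b q
          omega
      have := IH (N - 1) (by omega) (a / q) (b / q) (by omega)
      omega
    · have hmod : (a + b) % q = a % q + b % q - q := by
        have h5 : (a + b) % q = (a % q + b % q) % q := Nat.add_mod a b q
        have h6 : (a % q + b % q) % q = (a % q + b % q - q) % q := by
          conv_lhs => rw [show a % q + b % q = a % q + b % q - q + q by omega]
          rw [Nat.add_mod_right]
        rw [h5, h6, Nat.mod_eq_of_lt (by omega)]
      have hdiv : (a + b) / q = a / q + b / q + 1 := by
        rw [hkey, Nat.mul_add_div hq0]
        have h7 : (a % q + b % q) / q = 1 := by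
          conv_lhs => rw [show a % q + b % q = a % q + b % q - q + q by omega]
          rw [Nat.add_div_right _ hq0, Nat.div_eq_of_lt (by omega)]
        omega
      rw [hmod, hdiv]
      have ha1 : 0 < a := by omega
      have hb1 : 0 < b := by omega
      have hda' : a / q < a := Nat.div_lt_self ha1 (by omega)
      have hdb' : b / q < b := Nat.div_lt_self hb1 (by omega)
      have h1 := IH (N - 1) (by omega) (a / q + b / q) 1 (by omega)
      have h2 := IH (N - 1) (by omega) (a / q) (b / q) (by omega)
      rw [wNat_one hq] at h1
      omega

lemma wNat_add {q : ℕ} (hq : 2 ≤ q) (a b : ℕ) : wNat q (a + b) ≤ wNat q a + wNat q b :=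
  wNat_add_le hq (a + b) a b le_rfl

lemma wNat_lt_pow {q : ℕ} (hq : 2 ≤ q) : ∀ (m a : ℕ), a < q ^ m → wNat q a ≤ (q - 1) * m := by
  intro m
  induction m with
  | zero =>
    intro a ha
    rw [pow_zero] at ha
    have : a = 0 := by omega
    subst this; simp [wNat_zero]
  | succ m IHm =>
    intro a ha
    rw [wNat_rec hq]
    have h1 : a / q < q ^ m := by
      rw [Nat.div_lt_iff_lt_mul (by omega)]
      calc a < q ^ (m + 1) := ha
        _ = q ^ m * q := pow_succ q m
    have h2 := IHm (a / q) h1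
    have h3 : a % q < q := Nat.mod_lt a (by omega)
    have h4 : (q - 1) * (m + 1) = (q - 1) * m + (q - 1) := by ring
    omega

lemma wNat_split {q : ℕ} (hq : 2 ≤ q) :
    ∀ (j h l : ℕ), l < q ^ j → wNat q (h * q ^ j + l) = wNat q h + wNat q l := by
  intro j
  induction j with
  | zero =>
    intro h l hl
    rw [pow_zero] at hl ⊢
    have : l = 0 := by omega
    subst this
    simp [wNat_zero]
  | succ j IHj =>
    intro h l hl
    have hq0 : 0 < q := by omega
    have hrw : h * q ^ (j + 1) + l = q * (h * q ^ j + l / q) + l % q := by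
      calc h * q ^ (j + 1) + l = q * (h * q ^ j) + (q * (l / q) + l % q) := by
            rw [Nat.div_add_mod]; ring
        _ = q * (h * q ^ j + l / q) + l % q := by ring
    have hdiv : l / q < q ^ j := by
      rw [Nat.div_lt_iff_lt_mul hq0]
      calc l < q ^ (j + 1) := hl
        _ = q ^ j * q := pow_succ q j
    have hml : l % q < q := Nat.mod_lt l hq0
    have e1 : wNat q (h * q ^ (j + 1) + l) = l % q + wNat q (h * q ^ j + l / q) := by
      rw [hrw, wNat_rec hq, Nat.mul_add_mod, Nat.mul_add_div hq0,
          Nat.mod_eq_of_lt hml, Nat.div_eq_of_lt hml, Nat.add_zero]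
    have e2 := IHj h (l / q) hdiv
    have e3 := wNat_rec hq l
    omega

lemma wNat_mul_pow {q : ℕ} (hq : 2 ≤ q) (h j : ℕ) : wNat q (h * q ^ j) = wNat q h := by
  have := wNat_split hq j h 0 (pow_pos (by omega) j)
  simpa [wNat_zero] using this

lemma wNat_pow {q : ℕ} (hq : 2 ≤ q) (j : ℕ) : wNat q (q ^ j) = 1 := by
  have := wNat_mul_pow hq 1 j
  rwa [one_mul, wNat_one hq] at this

lemma wNat_digit {q : ℕ} (hq : 2 ≤ q) {e j : ℕ} (hdig : e / q ^ j % q ≠ 0) :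
    wNat q (e - q ^ j) + 1 = wNat q e := by
  have hq0 : 0 < q := by omega
  have hqj : 0 < q ^ j := pow_pos hq0 j
  obtain ⟨H, hH⟩ : ∃ H, H = e / q ^ j := ⟨_, rfl⟩
  obtain ⟨L, hL⟩ : ∃ L, L = e % q ^ j := ⟨_, rfl⟩
  rw [← hH] at hdig
  have hE : q ^ j * H + L = e := by rw [hH, hL]; exact Nat.div_add_mod e (q ^ j)
  have hHpos : 1 ≤ H := by
    by_contra h
    have : H = 0 := by omega
    rw [this] at hdig
    simp at hdig
  have hLlt : L < q ^ j := by rw [hL]; exact Nat.mod_lt e hqj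
  have h3 : H * q ^ j + L = e := by rw [← hE]; ring
  have hsub : e - q ^ j = (H - 1) * q ^ j + L := by
    have h2 : (H - 1) * q ^ j + q ^ j = H * q ^ j := by
      have h4 : H - 1 + 1 = H := by omega
      calc (H - 1) * q ^ j + q ^ j = (H - 1 + 1) * q ^ j := by ring
        _ = H * q ^ j := by rw [h4]
    omega
  have w1 : wNat q e = wNat q H + wNat q L := by
    rw [← h3]; exact wNat_split hq j H L hLlt
  have w2 : wNat q (e - q ^ j) = wNat q (H - 1) + wNat q L := by
    rw [hsub]; exact wNat_split hq j (H - 1) L hLlt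
  have hHq : H % q < q := Nat.mod_lt H hq0
  have hHd := Nat.div_add_mod H q
  have hH1' : H - 1 = q * (H / q) + (H % q - 1) := by omega
  have m1 : H % q - 1 < q := by omega
  have w3 : wNat q (H - 1) = H % q - 1 + wNat q (H / q) := by
    rw [hH1', wNat_rec hq, Nat.mul_add_mod, Nat.mul_add_div hq0,
        Nat.mod_eq_of_lt m1, Nat.div_eq_of_lt m1, Nat.add_zero]
  have w4 := wNat_rec hq H
  omega

/-! ### reduceExp -/

lemma two_le_pow {q n : ℕ} (hq : 2 ≤ q) (hn : n ≠ 0) : 2 ≤ q ^ n :=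
  le_trans hq (Nat.le_self_pow hn q)

lemma reduceExp_of_lt {q n e : ℕ} (h : e < q ^ n) : reduceExp q n e = e := if_pos h

lemma reduceExp_lt {q n : ℕ} (hq : 2 ≤ q) (hn : n ≠ 0) (e : ℕ) : reduceExp q n e < q ^ n := by
  have hQ := two_le_pow hq hn
  unfold reduceExp
  split_ifs with h1 h2
  · exact h1
  · omega
  · have : e % (q ^ n - 1) < q ^ n - 1 := Nat.mod_lt e (by omega)
    omega

lemma reduceExp_le {q n : ℕ} (e : ℕ) : reduceExp q n e ≤ e := by
  unfold reduceExp
  split_ifs with h1 h2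
  · exact le_rfl
  · omega
  · exact Nat.mod_le e _

lemma reduceExp_modEq {q n : ℕ} (hq : 2 ≤ q) (hn : n ≠ 0) (e : ℕ) :
    reduceExp q n e % (q ^ n - 1) = e % (q ^ n - 1) := by
  have hQ := two_le_pow hq hn
  unfold reduceExp
  split_ifs with h1 h2
  · rfl
  · rw [Nat.mod_self, Nat.dvd_iff_mod_eq_zero.1 h2]
  · exact Nat.mod_mod_of_dvd e dvd_rfl

lemma reduceExp_eq_zero {q n : ℕ} (hq : 2 ≤ q) (hn : n ≠ 0) {e : ℕ}
    (h : reduceExp q n e = 0) : e = 0 := by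
  have hQ := two_le_pow hq hn
  unfold reduceExp at h
  split_ifs at h with h1 h2
  · exact h
  · omega
  · exact absurd (Nat.dvd_of_mod_eq_zero h) h2

lemma reduceExp_eq_of_small {q n : ℕ} (hq : 2 ≤ q) (hn : n ≠ 0) {e x : ℕ}
    (he : q ^ n ≤ e) (hx1 : 1 ≤ x) (hx2 : x < q ^ n)
    (hcong : x % (q ^ n - 1) = e % (q ^ n - 1)) : reduceExp q n e = x := by
  have hQ := two_le_pow hq hn
  unfold reduceExp
  have hne : ¬ e < q ^ n := by omega
  rw [if_neg hne]
  by_cases hdvd : (q ^ n - 1) ∣ e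
  · rw [if_pos hdvd]
    have he0 : e % (q ^ n - 1) = 0 := Nat.dvd_iff_mod_eq_zero.1 hdvd
    have h1 : (q ^ n - 1) ∣ x := Nat.dvd_iff_mod_eq_zero.2 (by rw [hcong]; exact he0)
    have := Nat.le_of_dvd (by omega) h1
    omega
  · rw [if_neg hdvd]
    have hxlt : x < q ^ n - 1 := by
      rcases Nat.lt_or_ge x (q ^ n - 1) with h | h
      · exact h
      · exfalso
        have hx : x = q ^ n - 1 := by omega
        apply hdvd
        apply Nat.dvd_iff_mod_eq_zero.2
        rw [← hcong, hx, Nat.mod_self]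
    rw [← hcong, Nat.mod_eq_of_lt hxlt]

lemma reduceExp_congr {q n : ℕ} (hq : 2 ≤ q) (hn : n ≠ 0) {a b : ℕ}
    (ha : q ^ n ≤ a) (hb : q ^ n ≤ b)
    (hcong : a % (q ^ n - 1) = b % (q ^ n - 1)) : reduceExp q n a = reduceExp q n b := by
  have hQ := two_le_pow hq hn
  unfold reduceExp
  have hna : ¬ a < q ^ n := by omega
  have hnb : ¬ b < q ^ n := by omega
  rw [if_neg hna, if_neg hnb]
  have hdvd : (q ^ n - 1) ∣ a ↔ (q ^ n - 1) ∣ b := by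
    rw [Nat.dvd_iff_mod_eq_zero, Nat.dvd_iff_mod_eq_zero, hcong]
  by_cases h : (q ^ n - 1) ∣ a
  · rw [if_pos h, if_pos (hdvd.1 h)]
  · rw [if_neg h, if_neg (fun hb' => h (hdvd.2 hb')), hcong]

lemma reduceExp_sub_period {q n : ℕ} (hq : 2 ≤ q) (hn : n ≠ 0) {e : ℕ} (he : q ^ n ≤ e) :
    reduceExp q n e = reduceExp q n (e - (q ^ n - 1)) := by
  have hQ := two_le_pow hq hn
  have hcong : (e - (q ^ n - 1)) % (q ^ n - 1) = e % (q ^ n - 1) := by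
    conv_rhs => rw [show e = e - (q ^ n - 1) + (q ^ n - 1) by omega]
    rw [Nat.add_mod_right]
  rcases Nat.lt_or_ge (e - (q ^ n - 1)) (q ^ n) with h | h
  · rw [reduceExp_of_lt h]
    exact reduceExp_eq_of_small hq hn he (by omega) h hcong
  · exact reduceExp_congr hq hn he h hcong.symm

lemma reduceExp_fold {q n : ℕ} (hq : 2 ≤ q) (hn : n ≠ 0) {e : ℕ} (he : q ^ n ≤ e) :
    reduceExp q n e = reduceExp q n (e / q ^ n + e % q ^ n) := by
  have hQ := two_le_pow hq hn
  obtain ⟨H, hH⟩ : ∃ H, H = e / q ^ n := ⟨_, rfl⟩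
  obtain ⟨L, hL⟩ : ∃ L, L = e % q ^ n := ⟨_, rfl⟩
  rw [← hH, ← hL]
  have hE : q ^ n * H + L = e := by rw [hH, hL]; exact Nat.div_add_mod e (q ^ n)
  have hHpos : 1 ≤ H := by
    rw [hH]
    exact (Nat.one_le_div_iff (by omega)).2 he
  have hcong : (H + L) % (q ^ n - 1) = e % (q ^ n - 1) := by
    have h2 : (q ^ n - 1) * H + H = q ^ n * H := by
      have h3 : q ^ n - 1 + 1 = q ^ n := by omega
      calc (q ^ n - 1) * H + H = (q ^ n - 1 + 1) * H := by ring
        _ = q ^ n * H := by rw [h3]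
    conv_rhs => rw [show e = (q ^ n - 1) * H + (H + L) by omega]
    rw [Nat.mul_add_mod]
  rcases Nat.lt_or_ge (H + L) (q ^ n) with h | h
  · rw [reduceExp_of_lt h]
    exact reduceExp_eq_of_small hq hn he (by omega) h hcong
  · exact reduceExp_congr hq hn he h hcong.symm

lemma reduceExp_add {q n : ℕ} (hq : 2 ≤ q) (hn : n ≠ 0) (e1 e2 : ℕ) :
    reduceExp q n (reduceExp q n e1 + reduceExp q n e2) = reduceExp q n (e1 + e2) := by
  have hQ := two_le_pow hq hn
  obtain ⟨a, hadef⟩ : ∃ a, a = reduceExp q n e1 := ⟨_, rfl⟩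
  obtain ⟨b, hbdef⟩ : ∃ b, b = reduceExp q n e2 := ⟨_, rfl⟩
  rw [← hadef, ← hbdef]
  by_cases hab : a + b = e1 + e2
  · rw [hab]
  · have ha : a ≤ e1 := by rw [hadef]; exact reduceExp_le e1
    have hb : b ≤ e2 := by rw [hbdef]; exact reduceExp_le e2
    have hbig : q ^ n ≤ e1 + e2 := by
      have h1 : a < e1 ∨ b < e2 := by omega
      rcases h1 with h | h
      · have h2 : ¬ e1 < q ^ n := by
          intro hlt
          rw [reduceExp_of_lt hlt] at hadef
          omega
        omega
      · have h2 : ¬ e2 < q ^ n := by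
          intro hlt
          rw [reduceExp_of_lt hlt] at hbdef
          omega
        omega
    have hcong : (a + b) % (q ^ n - 1) = (e1 + e2) % (q ^ n - 1) := by
      rw [Nat.add_mod a b, hadef, hbdef, reduceExp_modEq hq hn, reduceExp_modEq hq hn,
          ← Nat.add_mod]
    rcases Nat.lt_or_ge (a + b) (q ^ n) with h | h
    · rw [reduceExp_of_lt h]
      have hpos : 1 ≤ a + b := by
        by_contra h0
        push_neg at h0
        have ha0 : reduceExp q n e1 = 0 := by omega
        have hb0 : reduceExp q n e2 = 0 := by omega
        have he1 := reduceExp_eq_zero hq hn ha0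
        have he2 := reduceExp_eq_zero hq hn hb0
        omega
      exact (reduceExp_eq_of_small hq hn hbig hpos h hcong).symm
    · exact reduceExp_congr hq hn h hbig hcong

lemma wNat_reduceExp_le {q n : ℕ} (hq : 2 ≤ q) (hn : n ≠ 0) :
    ∀ e, wNat q (reduceExp q n e) ≤ wNat q e := by
  intro e
  induction e using Nat.strong_induction_on with
  | _ e IH =>
    rcases Nat.lt_or_ge e (q ^ n) with h | h
    · rw [reduceExp_of_lt h]
    · have hQ := two_le_pow hq hn
      rw [reduceExp_fold hq hn h]
      obtain ⟨H, hH⟩ : ∃ H, H = e / q ^ n := ⟨_, rfl⟩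
      obtain ⟨L, hL⟩ : ∃ L, L = e % q ^ n := ⟨_, rfl⟩
      rw [← hH, ← hL]
      have hE : q ^ n * H + L = e := by rw [hH, hL]; exact Nat.div_add_mod e (q ^ n)
      have hHpos : 1 ≤ H := by rw [hH]; exact (Nat.one_le_div_iff (by omega)).2 h
      have hLlt : L < q ^ n := by rw [hL]; exact Nat.mod_lt e (by omega)
      have hlt : H + L < e := by
        have h2 : 2 * H ≤ q ^ n * H := Nat.mul_le_mul_right H (by omega)
        omega
      have h3 := IH (H + L) hlt
      have h4 := wNat_add hq H L
      have h5 : wNat q e = wNat q H + wNat q L := by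
        have hE2 : H * q ^ n + L = e := by rw [← hE]; ring
        rw [← hE2]
        exact wNat_split hq n H L hLlt
      omega

/-! ### digit sums -/

lemma sumdig_succ (q m : ℕ) (g : ℕ → ℕ) :
    (∑ j ∈ Finset.range (m + 1), g j * q ^ j)
      = q * (∑ j ∈ Finset.range m, g (j + 1) * q ^ j) + g 0 := by
  rw [Finset.sum_range_succ', pow_zero, mul_one, Finset.mul_sum]
  congr 1
  apply Finset.sum_congr rfl
  intro j _
  rw [pow_succ]
  ring

lemma sumdig_lt {q : ℕ} (hq : 2 ≤ q) (g : ℕ → ℕ) (hg : ∀ j, g j < q) :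
    ∀ m, (∑ j ∈ Finset.range m, g j * q ^ j) < q ^ m := by
  intro m
  induction m with
  | zero => simp
  | succ m IHm =>
    rw [Finset.sum_range_succ]
    have h1 : g m * q ^ m ≤ (q - 1) * q ^ m := Nat.mul_le_mul_right _ (by have := hg m; omega)
    have h2 : q ^ m + (q - 1) * q ^ m = q ^ m * q := by
      have h3 : 1 + (q - 1) = q := by omega
      calc q ^ m + (q - 1) * q ^ m = (1 + (q - 1)) * q ^ m := by ring
        _ = q ^ m * q := by rw [h3]; ring
    have h4 : q ^ (m + 1) = q ^ m * q := pow_succ q m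
    omega

lemma sumdig_digit {q : ℕ} (hq : 2 ≤ q) :
    ∀ (i m : ℕ) (g : ℕ → ℕ), (∀ j, g j < q) →
      (∑ j ∈ Finset.range m, g j * q ^ j) / q ^ i % q = if i < m then g i else 0 := by
  intro i
  induction i with
  | zero =>
    intro m g hg
    cases m with
    | zero => simp
    | succ m =>
      rw [sumdig_succ, pow_zero, Nat.div_one, Nat.mul_add_mod, Nat.mod_eq_of_lt (hg 0),
          if_pos (by omega)]
  | succ i IH =>
    intro m g hg
    cases m with
    | zero => simp
    | succ m =>
      rw [sumdig_succ, pow_succ', ← Nat.div_div_eq_div_mul,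
          Nat.mul_add_div (by omega), Nat.div_eq_of_lt (hg 0), Nat.add_zero,
          IH m (fun j => g (j + 1)) (fun j => hg (j + 1))]
      by_cases h : i < m
      · rw [if_pos h, if_pos (by omega)]
      · rw [if_neg h, if_neg (by omega)]

lemma digits_sum {q : ℕ} (hq : 2 ≤ q) : ∀ (m x : ℕ), x < q ^ m →
    (∑ j ∈ Finset.range m, x / q ^ j % q * q ^ j) = x := by
  intro m
  induction m with
  | zero =>
    intro x hx
    rw [pow_zero] at hx
    have : x = 0 := by omega
    subst this; simp
  | succ m IH =>
    intro x hx
    have hq0 : 0 < q := by omega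
    have hdiv : x / q < q ^ m := by
      rw [Nat.div_lt_iff_lt_mul hq0]
      calc x < q ^ (m + 1) := hx
        _ = q ^ m * q := pow_succ q m
    rw [Finset.sum_range_succ', pow_zero, Nat.div_one, mul_one]
    have key : (∑ j ∈ Finset.range m, x / q ^ (j + 1) % q * q ^ (j + 1))
        = q * ∑ j ∈ Finset.range m, x / q / q ^ j % q * q ^ j := by
      rw [Finset.mul_sum]
      apply Finset.sum_congr rfl
      intro j _
      rw [pow_succ', ← Nat.div_div_eq_div_mul]
      ring
    rw [key, IH (x / q) hdiv]
    exact Nat.div_add_mod x q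

lemma digitsum_eq_wNat {q : ℕ} (hq : 2 ≤ q) : ∀ (m x : ℕ), x < q ^ m →
    (∑ j ∈ Finset.range m, x / q ^ j % q) = wNat q x := by
  intro m
  induction m with
  | zero =>
    intro x hx
    rw [pow_zero] at hx
    have : x = 0 := by omega
    subst this; simp [wNat_zero]
  | succ m IH =>
    intro x hx
    have hq0 : 0 < q := by omega
    have hdiv : x / q < q ^ m := by
      rw [Nat.div_lt_iff_lt_mul hq0]
      calc x < q ^ (m + 1) := hx
        _ = q ^ m * q := pow_succ q m
    rw [Finset.sum_range_succ', pow_zero, Nat.div_one]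
    have key : (∑ j ∈ Finset.range m, x / q ^ (j + 1) % q)
        = ∑ j ∈ Finset.range m, x / q / q ^ j % q := by
      apply Finset.sum_congr rfl
      intro j _
      rw [pow_succ', ← Nat.div_div_eq_div_mul]
    rw [key, IH (x / q) hdiv, wNat_rec hq x]
    omega

/-! ### degB, Nb, expVec -/

def degB {n : ℕ} (b : Fin n →₀ ℕ) : ℕ := ∑ j : Fin n, b j

def Nb (q : ℕ) {n : ℕ} (b : Fin n →₀ ℕ) : ℕ := ∑ j : Fin n, b j * q ^ (j : ℕ)

lemma degB_add {n : ℕ} (b c : Fin n →₀ ℕ) : degB (b + c) = degB b + degB c := by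
  simp [degB, Finsupp.add_apply, Finset.sum_add_distrib]

lemma Nb_add (q : ℕ) {n : ℕ} (b c : Fin n →₀ ℕ) : Nb q (b + c) = Nb q b + Nb q c := by
  simp [Nb, Finsupp.add_apply, Nat.add_mul, Finset.sum_add_distrib]

lemma degB_single {n : ℕ} (j : Fin n) (c : ℕ) : degB (Finsupp.single j c) = c := by
  simp [degB, Finsupp.single_apply]

lemma Nb_single (q : ℕ) {n : ℕ} (j : Fin n) (c : ℕ) :
    Nb q (Finsupp.single j c) = c * q ^ (j : ℕ) := by
  simp [Nb, Finsupp.single_apply, ite_mul]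

lemma le_degB {n : ℕ} (b : Fin n →₀ ℕ) (j : Fin n) : b j ≤ degB b :=
  Finset.single_le_sum (f := fun i => b i) (fun i _ => Nat.zero_le _) (Finset.mem_univ j)

lemma expVec_apply (q n e : ℕ) (j : Fin n) :
    expVec q n e j = reduceExp q n e / q ^ (j : ℕ) % q := by
  simp [expVec]

lemma expVec_congr {q n : ℕ} {e1 e2 : ℕ} (h : reduceExp q n e1 = reduceExp q n e2) :
    expVec q n e1 = expVec q n e2 := by
  ext j
  rw [expVec_apply, expVec_apply, h]

lemma expVec_of_all_lt {q n : ℕ} (hq : 2 ≤ q) (hn : n ≠ 0) (b : Fin n →₀ ℕ)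
    (hb : ∀ j, b j < q) : expVec q n (Nb q b) = b := by
  classical
  set g : ℕ → ℕ := fun m => if h : m < n then b ⟨m, h⟩ else 0 with hg
  have hgq : ∀ j, g j < q := by
    intro j
    rw [hg]
    dsimp only
    split_ifs
    · exact hb _
    · omega
  have hNb : Nb q b = ∑ j ∈ Finset.range n, g j * q ^ j := by
    rw [← Fin.sum_univ_eq_sum_range (fun m => g m * q ^ m) n]
    apply Finset.sum_congr rfl
    intro j _
    rw [hg]
    dsimp only
    rw [dif_pos j.isLt, Fin.eta]
  have hlt : Nb q b < q ^ n := by rw [hNb]; exact sumdig_lt hq g hgq n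
  ext j
  rw [expVec_apply, reduceExp_of_lt hlt, hNb, sumdig_digit hq j n g hgq, if_pos j.isLt, hg]
  dsimp only
  rw [dif_pos j.isLt, Fin.eta]

lemma Nb_expVec {q n : ℕ} (hq : 2 ≤ q) (hn : n ≠ 0) (e : ℕ) :
    Nb q (expVec q n e) = reduceExp q n e := by
  have h1 : Nb q (expVec q n e) = ∑ j ∈ Finset.range n, reduceExp q n e / q ^ j % q * q ^ j := by
    rw [← Fin.sum_univ_eq_sum_range (fun j => reduceExp q n e / q ^ j % q * q ^ j) n]
    apply Finset.sum_congr rfl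
    intro j _
    rw [expVec_apply]
  rw [h1]
  exact digits_sum hq n _ (reduceExp_lt hq hn e)

lemma degB_expVec {q n : ℕ} (hq : 2 ≤ q) (hn : n ≠ 0) (e : ℕ) :
    degB (expVec q n e) = wNat q (reduceExp q n e) := by
  have h1 : degB (expVec q n e) = ∑ j ∈ Finset.range n, reduceExp q n e / q ^ j % q := by
    unfold degB
    rw [← Fin.sum_univ_eq_sum_range (fun j => reduceExp q n e / q ^ j % q) n]
    apply Finset.sum_congr rfl
    intro j _
    rw [expVec_apply]
  rw [h1]
  exact digitsum_eq_wNat hq n _ (reduceExp_lt hq hn e)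

lemma degB_expVec_le {q n : ℕ} (hq : 2 ≤ q) (hn : n ≠ 0) (e : ℕ) :
    degB (expVec q n e) ≤ wNat q e := by
  rw [degB_expVec hq hn]
  exact wNat_reduceExp_le hq hn e

/-! ### Vspace -/

section vsp
variable {k : Type*} [Field k] {σ : Type*} {E : Finset (MvPolynomial σ k)}

lemma mem_Vspace_of_mem_E {f : MvPolynomial σ k} {m : ℕ} (hf : f ∈ E)
    (hdeg : f.totalDegree ≤ m) : f ∈ Vspace E m := by
  rw [Vspace, Submodule.mem_sInf]
  rintro W ⟨h1, _⟩
  exact h1 f hf hdeg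

lemma mul_mem_Vspace {g h : MvPolynomial σ k} {m : ℕ} (hg : g ∈ Vspace E m)
    (hdeg : (g * h).totalDegree ≤ m) : g * h ∈ Vspace E m := by
  rw [Vspace, Submodule.mem_sInf] at hg ⊢
  intro W hW
  exact hW.2 g (hg W hW) h hdeg

lemma Vspace_mono {m m' : ℕ} (h : m ≤ m') : Vspace E m ≤ Vspace E m' := by
  apply sInf_le_sInf
  rintro W ⟨h1, h2⟩
  exact ⟨fun f hf hd => h1 f hf (hd.trans h), fun g hgW hh hd => h2 g hgW hh (hd.trans h)⟩

end vsp

/-! ### normal form reduction -/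

section nf
variable {k : Type*} [Field k] {q n : ℕ} {E : Finset (MvPolynomial (Fin n) k)}

lemma totalDegree_monomial_le_degB (b : Fin n →₀ ℕ) (c : k) :
    (monomial b c).totalDegree ≤ degB b := by
  refine le_trans (totalDegree_monomial_le b c) ?_
  rw [Finsupp.sum_fintype _ _ (fun _ => rfl)]
  exact le_rfl

lemma NF_aux (hq : 2 ≤ q) [NeZero n]
    (hE : ∀ i : Fin n, (X i ^ q - X (i + 1) : MvPolynomial (Fin n) k) ∈ E) :
    ∀ (D : ℕ) (b : Fin n →₀ ℕ), degB b ≤ D →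
      (monomial b (1 : k) - monomial (expVec q n (Nb q b)) 1) ∈ Vspace E (degB b) := by
  have hn : n ≠ 0 := NeZero.ne n
  intro D
  induction D with
  | zero =>
    intro b hb
    have hball : ∀ j, b j < q := fun j => by have := le_degB b j; omega
    rw [expVec_of_all_lt hq hn b hball, sub_self]
    exact Submodule.zero_mem _
  | succ D IHD =>
    intro b hb
    by_cases hball : ∀ j, b j < q
    · rw [expVec_of_all_lt hq hn b hball, sub_self]
      exact Submodule.zero_mem _
    · push_neg at hball
      obtain ⟨j, hj⟩ := hball
      set b₀ : Fin n →₀ ℕ := b - Finsupp.single j q with hb₀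
      have hb0eq : b = b₀ + Finsupp.single j q := by
        ext i
        rw [Finsupp.add_apply, hb₀, Finsupp.tsub_apply]
        rcases eq_or_ne i j with rfl | hij
        · rw [Finsupp.single_eq_same]
          omega
        · rw [Finsupp.single_eq_of_ne' (Ne.symm hij)]
          omega
      set b' : Fin n →₀ ℕ := b₀ + Finsupp.single (j + 1) 1 with hb'
      have hdegb : degB b = degB b₀ + q := by
        conv_lhs => rw [hb0eq]
        rw [degB_add, degB_single]
      have hdegb' : degB b' = degB b₀ + 1 := by
        rw [hb', degB_add, degB_single]
      have hjq : q ≤ degB b := le_trans hj (le_degB b j)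
      have hX1 : (X (j + 1) : MvPolynomial (Fin n) k) = monomial (Finsupp.single (j + 1) 1) 1 :=
        rfl
      have hkey : (X j ^ q - X (j + 1)) * monomial b₀ (1 : k)
          = monomial b 1 - monomial b' 1 := by
        rw [sub_mul, X_pow_eq_monomial, hX1, monomial_mul, monomial_mul, one_mul]
        congr 2
        · rw [hb0eq, add_comm]
        · rw [hb', add_comm]
      have hfe : (X j ^ q - X (j + 1) : MvPolynomial (Fin n) k) ∈ Vspace E (degB b) := by
        apply mem_Vspace_of_mem_E (hE j)
        calc (X j ^ q - X (j + 1) : MvPolynomial (Fin n) k).totalDegree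
            ≤ max (X j ^ q : MvPolynomial (Fin n) k).totalDegree
                (-(X (j + 1)) : MvPolynomial (Fin n) k).totalDegree := by
              rw [sub_eq_add_neg]
              exact totalDegree_add _ _
          _ ≤ q := by
              rw [totalDegree_neg, totalDegree_X_pow, totalDegree_X]
              omega
          _ ≤ degB b := hjq
      have hprod : (X j ^ q - X (j + 1)) * monomial b₀ (1 : k) ∈ Vspace E (degB b) := by
        apply mul_mem_Vspace hfe
        rw [hkey]
        have h1 := totalDegree_monomial_le_degB b (1 : k)
        have h2 := totalDegree_monomial_le_degB b' (1 : k)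
        calc (monomial b (1 : k) - monomial b' 1).totalDegree
            ≤ max (monomial b (1 : k)).totalDegree (-(monomial b' (1 : k))).totalDegree := by
              rw [sub_eq_add_neg]
              exact totalDegree_add _ _
          _ ≤ degB b := by
              rw [totalDegree_neg]
              omega
      have hIH : monomial b' (1 : k) - monomial (expVec q n (Nb q b')) 1
          ∈ Vspace E (degB b) := by
        refine Vspace_mono (by omega) (IHD b' (by omega))
      have hNbeq : expVec q n (Nb q b') = expVec q n (Nb q b) := by
        have hNb : Nb q b = Nb q b₀ + q * q ^ (j : ℕ) := by
          conv_lhs => rw [hb0eq]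
          rw [Nb_add, Nb_single]
        have hNb' : Nb q b' = Nb q b₀ + 1 * q ^ ((j + 1 : Fin n) : ℕ) := by
          rw [hb', Nb_add, Nb_single]
        have hj1 : ((j + 1 : Fin n) : ℕ) = ((j : ℕ) + 1) % n := by
          rw [Fin.val_add, Fin.val_one']
          rw [Nat.add_mod (j : ℕ) 1 n, Nat.mod_eq_of_lt j.isLt]
        rcases Nat.lt_or_ge ((j : ℕ) + 1) n with hlt | hge
        · have hv : ((j + 1 : Fin n) : ℕ) = (j : ℕ) + 1 := by
            rw [hj1, Nat.mod_eq_of_lt hlt]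
          rw [hNb, hNb', hv, one_mul, pow_succ']
        · have hjn : (j : ℕ) + 1 = n := by have := j.isLt; omega
          have hwrap : ((j + 1 : Fin n) : ℕ) = 0 := by rw [hj1, hjn, Nat.mod_self]
          have hqq : q * q ^ (j : ℕ) = q ^ n := by rw [← pow_succ', hjn]
          rw [hNb, hNb', hwrap, pow_zero, mul_one, hqq]
          apply expVec_congr
          have hQ := two_le_pow hq hn
          have hbig : q ^ n ≤ Nb q b₀ + q ^ n := by omega
          have h2 : Nb q b₀ + q ^ n - (q ^ n - 1) = Nb q b₀ + 1 := by omega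
          conv_rhs => rw [reduceExp_sub_period hq hn hbig, h2]
      have heq : monomial b (1 : k) - monomial (expVec q n (Nb q b)) 1
          = (X j ^ q - X (j + 1)) * monomial b₀ 1
            + (monomial b' 1 - monomial (expVec q n (Nb q b')) 1) := by
        rw [hkey, hNbeq]
        ring
      rw [heq]
      exact Submodule.add_mem _ hprod hIH

lemma NF (hq : 2 ≤ q) [NeZero n]
    (hE : ∀ i : Fin n, (X i ^ q - X (i + 1) : MvPolynomial (Fin n) k) ∈ E)
    (b : Fin n →₀ ℕ) :
    (monomial b (1 : k) - monomial (expVec q n (Nb q b)) 1) ∈ Vspace E (degB b) :=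
  NF_aux hq hE (degB b) b le_rfl

lemma MULT (hq : 2 ≤ q) [NeZero n]
    (hE : ∀ i : Fin n, (X i ^ q - X (i + 1) : MvPolynomial (Fin n) k) ∈ E)
    (e1 e2 : ℕ) :
    (monomial (expVec q n e1) (1 : k)) * monomial (expVec q n e2) 1
        - monomial (expVec q n (e1 + e2)) 1
      ∈ Vspace E (degB (expVec q n e1) + degB (expVec q n e2)) := by
  have hn : n ≠ 0 := NeZero.ne n
  have h1 := NF hq hE (expVec q n e1 + expVec q n e2)
  rw [degB_add] at h1
  have h2 : expVec q n (Nb q (expVec q n e1 + expVec q n e2)) = expVec q n (e1 + e2) := by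
    apply expVec_congr
    rw [Nb_add, Nb_expVec hq hn, Nb_expVec hq hn]
    exact reduceExp_add hq hn e1 e2
  rw [h2] at h1
  rw [monomial_mul, one_mul]
  exact h1

end nf

/-! ### remainders -/

section poly
variable {k : Type*} [Field k]

lemma h2_ne_zero {h2 : Polynomial k} {d : ℕ} (hd : h2.natDegree = d) (hd0 : 0 < d) :
    h2 ≠ 0 := by
  intro h
  rw [h, Polynomial.natDegree_zero] at hd
  omega

lemma mod_degree_lt {h2 : Polynomial k} (hne : h2 ≠ 0) (p : Polynomial k) :
    (p % h2).degree < h2.degree := by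
  rw [Polynomial.mod_def, ← Polynomial.degree_mul_leadingCoeff_inv h2 hne]
  exact Polynomial.degree_modByMonic_lt p (Polynomial.monic_mul_leadingCoeff_inv hne)

lemma dvd_sub_mod (h2 p : Polynomial k) : h2 ∣ p - p % h2 := by
  have h := EuclideanDomain.div_add_mod p h2
  exact ⟨p / h2, by linear_combination -h⟩

lemma mod_unique {h2 : Polynomial k} (hne : h2 ≠ 0) {p a : Polynomial k}
    (hdvd : h2 ∣ p - a) (hdeg : a.degree < h2.degree) : p % h2 = a := by
  have h1 : h2 ∣ p % h2 - a := by
    have h2' := dvd_sub_mod h2 p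
    have h3 := dvd_sub hdvd h2'
    have heq : p - a - (p - p % h2) = p % h2 - a := by ring
    rwa [heq] at h3
  have hdeg2 : (p % h2 - a).degree < h2.degree :=
    lt_of_le_of_lt (Polynomial.degree_sub_le _ _) (max_lt (mod_degree_lt hne p) hdeg)
  have h4 := Polynomial.eq_zero_of_dvd_of_degree_lt h1 hdeg2
  exact sub_eq_zero.1 h4

lemma mod_X_pow_of_lt {h2 : Polynomial k} {d : ℕ} (hd : h2.natDegree = d) (hd0 : 0 < d)
    {e : ℕ} (he : e < d) : (Polynomial.X ^ e : Polynomial k) % h2 = Polynomial.X ^ e := by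
  have hne := h2_ne_zero hd hd0
  apply mod_unique hne (by rw [sub_self]; exact dvd_zero _)
  rw [Polynomial.degree_X_pow, Polynomial.degree_eq_natDegree hne, hd]
  exact_mod_cast he

lemma mod_X_pow_d {h2 : Polynomial k} {d : ℕ} (hd : h2.natDegree = d) (hd0 : 0 < d) :
    (Polynomial.X ^ d : Polynomial k) % h2
      = Polynomial.X ^ d - Polynomial.C h2.leadingCoeff⁻¹ * h2 := by
  have hne := h2_ne_zero hd hd0
  have hlc : h2.leadingCoeff ≠ 0 := Polynomial.leadingCoeff_ne_zero.2 hne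
  apply mod_unique hne
  · exact ⟨Polynomial.C h2.leadingCoeff⁻¹, by ring⟩
  · have hd1 : (Polynomial.X ^ d : Polynomial k).degree
        = (Polynomial.C h2.leadingCoeff⁻¹ * h2).degree := by
      rw [Polynomial.degree_X_pow, Polynomial.degree_C_mul (inv_ne_zero hlc),
          Polynomial.degree_eq_natDegree hne, hd]
    have hd2 : (Polynomial.X ^ d : Polynomial k) ≠ 0 := pow_ne_zero _ Polynomial.X_ne_zero
    have hd3 : (Polynomial.X ^ d : Polynomial k).leadingCoeff
        = (Polynomial.C h2.leadingCoeff⁻¹ * h2).leadingCoeff := by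
      rw [Polynomial.leadingCoeff_X_pow, Polynomial.leadingCoeff_mul,
          Polynomial.leadingCoeff_C, inv_mul_cancel₀ hlc]
    have h5 := Polynomial.degree_sub_lt hd1 hd2 hd3
    rw [Polynomial.degree_X_pow] at h5
    rw [Polynomial.degree_eq_natDegree hne, hd]
    exact_mod_cast h5

lemma X_pow_mul_expand (p : Polynomial k) (s : ℕ) :
    p * Polynomial.X ^ s = p.sum fun a c => c • (Polynomial.X ^ (a + s) : Polynomial k) := by
  conv_lhs => rw [← Polynomial.sum_monomial_eq p]
  rw [Polynomial.sum_def, Polynomial.sum_def, Finset.sum_mul]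
  apply Finset.sum_congr rfl
  intro a _
  rw [Polynomial.X_pow_eq_monomial, Polynomial.X_pow_eq_monomial,
      Polynomial.monomial_mul_monomial, Polynomial.smul_monomial, mul_one, smul_eq_mul, mul_one]

lemma mod_X_pow_add {h2 : Polynomial k} {d : ℕ} (hd : h2.natDegree = d) (hd0 : 0 < d)
    (f s : ℕ) :
    (Polynomial.X ^ (f + s) : Polynomial k) % h2
      = ((Polynomial.X ^ f : Polynomial k) % h2).sum
          fun a c => c • ((Polynomial.X ^ (a + s) : Polynomial k) % h2) := by
  have hne := h2_ne_zero hd hd0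
  apply mod_unique hne
  · have hexp := X_pow_mul_expand ((Polynomial.X ^ f : Polynomial k) % h2) s
    have heq : Polynomial.X ^ (f + s)
          - ((Polynomial.X ^ f : Polynomial k) % h2).sum
              (fun a c => c • ((Polynomial.X ^ (a + s) : Polynomial k) % h2))
        = Polynomial.X ^ s * (Polynomial.X ^ f - (Polynomial.X ^ f : Polynomial k) % h2)
          + ∑ a ∈ ((Polynomial.X ^ f : Polynomial k) % h2).support,
              ((Polynomial.X ^ f : Polynomial k) % h2).coeff a
                • (Polynomial.X ^ (a + s) - (Polynomial.X ^ (a + s) : Polynomial k) % h2) := by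
      rw [Polynomial.sum_def]
      have hsub : (∑ a ∈ ((Polynomial.X ^ f : Polynomial k) % h2).support,
              ((Polynomial.X ^ f : Polynomial k) % h2).coeff a
                • (Polynomial.X ^ (a + s) - (Polynomial.X ^ (a + s) : Polynomial k) % h2))
          = (∑ a ∈ ((Polynomial.X ^ f : Polynomial k) % h2).support,
              ((Polynomial.X ^ f : Polynomial k) % h2).coeff a • Polynomial.X ^ (a + s))
            - ∑ a ∈ ((Polynomial.X ^ f : Polynomial k) % h2).support,
              ((Polynomial.X ^ f : Polynomial k) % h2).coeff a
                • ((Polynomial.X ^ (a + s) : Polynomial k) % h2) := by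
        rw [← Finset.sum_sub_distrib]
        exact Finset.sum_congr rfl fun a _ => smul_sub _ _ _
      rw [hsub]
      have hmul : (∑ a ∈ ((Polynomial.X ^ f : Polynomial k) % h2).support,
              ((Polynomial.X ^ f : Polynomial k) % h2).coeff a • Polynomial.X ^ (a + s))
          = ((Polynomial.X ^ f : Polynomial k) % h2) * Polynomial.X ^ s := by
        rw [hexp, Polynomial.sum_def]
      rw [hmul, pow_add]
      ring
    rw [heq]
    apply dvd_add
    · exact Dvd.dvd.mul_left (dvd_sub_mod h2 (Polynomial.X ^ f)) _
    · apply Finset.dvd_sum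
      intro a _
      rw [Polynomial.smul_eq_C_mul]
      exact Dvd.dvd.mul_left (dvd_sub_mod h2 _) _
  · rw [Polynomial.sum_def]
    refine lt_of_le_of_lt (Polynomial.degree_sum_le _ _) ?_
    rw [Finset.sup_lt_iff]
    · intro a _
      exact lt_of_le_of_lt (Polynomial.degree_smul_le _ _) (mod_degree_lt hne _)
    · rw [Polynomial.degree_eq_natDegree hne]
      exact_mod_cast WithBot.bot_lt_coe _

lemma mod_support_lt {h2 : Polynomial k} {d : ℕ} (hd : h2.natDegree = d) (hd0 : 0 < d)
    (p : Polynomial k) {a : ℕ} (ha : a ∈ (p % h2).support) : a < d := by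
  have hne := h2_ne_zero hd hd0
  have h1 : (a : WithBot ℕ) ≤ (p % h2).degree :=
    Polynomial.le_degree_of_ne_zero (Polynomial.mem_support_iff.1 ha)
  have h2' := mod_degree_lt hne p
  rw [Polynomial.degree_eq_natDegree hne, hd] at h2'
  have h3 := lt_of_le_of_lt h1 h2'
  exact_mod_cast h3

end poly

/-! ### fakeWeil is linear -/

section fw
variable {k : Type*} [Field k]

noncomputable def fwLM (q n : ℕ) : Polynomial k →ₗ[k] MvPolynomial (Fin n) k where
  toFun := fakeWeil q n
  map_add' p r := by
    unfold fakeWeil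
    apply Polynomial.sum_add_index
    · intro i; simp
    · intro i b1 b2; rw [map_add]
  map_smul' c p := by
    simp only [RingHom.id_apply]
    unfold fakeWeil
    rw [Polynomial.sum_smul_index (hf := fun i => by simp)]
    rw [Polynomial.sum_def, Polynomial.sum_def, Finset.smul_sum]
    apply Finset.sum_congr rfl
    intro a _
    rw [MvPolynomial.smul_monomial, smul_eq_mul]

lemma fakeWeil_eq_fwLM (q n : ℕ) (p : Polynomial k) : fakeWeil q n p = fwLM q n p := rfl

lemma fakeWeil_sub (q n : ℕ) (p r : Polynomial k) :
    fakeWeil q n (p - r) = fakeWeil q n p - fakeWeil q n r := by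
  rw [fakeWeil_eq_fwLM, fakeWeil_eq_fwLM, fakeWeil_eq_fwLM, map_sub]

lemma fakeWeil_smul (q n : ℕ) (c : k) (p : Polynomial k) :
    fakeWeil q n (c • p) = c • fakeWeil q n p := by
  rw [fakeWeil_eq_fwLM, fakeWeil_eq_fwLM, map_smul]

lemma fakeWeil_finset_sum (q n : ℕ) {α : Type*} (s : Finset α) (g : α → Polynomial k) :
    fakeWeil q n (∑ a ∈ s, g a) = ∑ a ∈ s, fakeWeil q n (g a) := by
  rw [fakeWeil_eq_fwLM, map_sum]
  rfl

lemma fakeWeil_X_pow (q n : ℕ) (e : ℕ) :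
    fakeWeil q n ((Polynomial.X : Polynomial k) ^ e) = monomial (expVec q n e) (1 : k) := by
  unfold fakeWeil
  rw [Polynomial.X_pow_eq_monomial]
  exact Polynomial.sum_monomial_index 1 _ (by simp)

lemma fakeWeil_sum_support (q n : ℕ) (p : Polynomial k) :
    fakeWeil q n p = ∑ a ∈ p.support, p.coeff a • monomial (expVec q n a) (1 : k) := by
  unfold fakeWeil
  rw [Polynomial.sum_def]
  apply Finset.sum_congr rfl
  intro a _
  rw [MvPolynomial.smul_monomial, smul_eq_mul, mul_one]

end fw

/-! ### the step lemma -/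

section main
variable {k : Type*} [Field k] [DecidableEq k]

lemma fieldeqn_mem (q n : ℕ) [NeZero n] (F : Finset (Polynomial k)) (i : Fin n) :
    (X i ^ q - X (i + 1) : MvPolynomial (Fin n) k) ∈ fakeWeilSystem q n F := by
  unfold fakeWeilSystem
  apply Finset.mem_union_right
  exact Finset.mem_image.2 ⟨i, Finset.mem_univ i, rfl⟩

lemma step (q n : ℕ) (hq : 2 ≤ q) [NeZero n] (F : Finset (Polynomial k))
    (h2 : Polynomial k) (d : ℕ) (hd : h2.natDegree = d) (hd0 : 0 < d)
    (M f s : ℕ)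
    (hZf : fakeWeil q n (Polynomial.X ^ f)
        - fakeWeil q n ((Polynomial.X ^ f : Polynomial k) % h2)
        ∈ Vspace (fakeWeilSystem q n F) M)
    (hC2 : degB (expVec q n f) + degB (expVec q n s) ≤ M)
    (hC3 : ∀ a ∈ ((Polynomial.X ^ f : Polynomial k) % h2).support,
        degB (expVec q n a) + degB (expVec q n s) ≤ M)
    (hC4 : ∀ a ∈ ((Polynomial.X ^ f : Polynomial k) % h2).support,
        fakeWeil q n (Polynomial.X ^ (a + s))
          - fakeWeil q n ((Polynomial.X ^ (a + s) : Polynomial k) % h2)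
          ∈ Vspace (fakeWeilSystem q n F) M) :
    fakeWeil q n (Polynomial.X ^ (f + s))
      - fakeWeil q n ((Polynomial.X ^ (f + s) : Polynomial k) % h2)
      ∈ Vspace (fakeWeilSystem q n F) M := by
  have hn : n ≠ 0 := NeZero.ne n
  have hEfe : ∀ i : Fin n,
      (X i ^ q - X (i + 1) : MvPolynomial (Fin n) k) ∈ fakeWeilSystem q n F :=
    fieldeqn_mem q n F
  set E := fakeWeilSystem q n F with hE
  set rf := (Polynomial.X ^ f : Polynomial k) % h2 with hrf
  set ms := monomial (expVec q n s) (1 : k) with hms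
  set mf := monomial (expVec q n f) (1 : k) with hmf
  -- A1
  have hA1 : monomial (expVec q n (f + s)) (1 : k) - mf * ms ∈ Vspace E M := by
    have h1 := MULT hq hEfe f s (E := E)
    have h2' := Submodule.neg_mem _ (Vspace_mono hC2 h1)
    rwa [neg_sub] at h2'
  -- degree helper
  have hdegms : ∀ (b : Fin n →₀ ℕ) (c : k),
      (monomial b c * ms).totalDegree ≤ degB b + degB (expVec q n s) := by
    intro b c
    rw [hms, MvPolynomial.monomial_mul]
    refine le_trans (totalDegree_monomial_le_degB _ _) ?_
    rw [degB_add]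
  -- A2
  have hA2 : (mf - fakeWeil q n rf) * ms ∈ Vspace E M := by
    apply mul_mem_Vspace
    · rw [hmf, ← fakeWeil_X_pow]
      exact hZf
    · have h8 : (mf * ms - fakeWeil q n rf * ms).totalDegree
          ≤ max (mf * ms).totalDegree (fakeWeil q n rf * ms).totalDegree := by
        rw [sub_eq_add_neg]
        refine le_trans (totalDegree_add _ _) ?_
        rw [totalDegree_neg]
      rw [sub_mul]
      refine le_trans h8 (max_le ?_ ?_)
      · exact le_trans (hdegms _ _) hC2
      · rw [fakeWeil_sum_support, Finset.sum_mul]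
        refine le_trans (totalDegree_finset_sum _ _) ?_
        apply Finset.sup_le
        intro a ha
        rw [smul_mul_assoc]
        refine le_trans (totalDegree_smul_le _ _) ?_
        exact le_trans (hdegms _ _) (hC3 a ha)
  -- A3
  have hA3 : (∑ a ∈ rf.support, rf.coeff a
        • (monomial (expVec q n a) (1 : k) * ms - monomial (expVec q n (a + s)) 1))
      ∈ Vspace E M := by
    apply Submodule.sum_mem
    intro a ha
    apply Submodule.smul_mem
    exact Vspace_mono (hC3 a ha) (MULT hq hEfe a s (E := E))
  -- A4
  have hA4 : (∑ a ∈ rf.support, rf.coeff a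
        • (monomial (expVec q n (a + s)) (1 : k)
            - fakeWeil q n ((Polynomial.X ^ (a + s) : Polynomial k) % h2)))
      ∈ Vspace E M := by
    apply Submodule.sum_mem
    intro a ha
    apply Submodule.smul_mem
    have h1 := hC4 a ha
    rwa [fakeWeil_X_pow] at h1
  -- identities
  have hsum3 : (∑ a ∈ rf.support, rf.coeff a • (monomial (expVec q n a) (1 : k) * ms))
      = fakeWeil q n rf * ms := by
    rw [fakeWeil_sum_support, Finset.sum_mul]
    exact Finset.sum_congr rfl fun a _ => (smul_mul_assoc _ _ _).symm
  have hsum4 : fakeWeil q n ((Polynomial.X ^ (f + s) : Polynomial k) % h2)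
      = ∑ a ∈ rf.support, rf.coeff a
          • fakeWeil q n ((Polynomial.X ^ (a + s) : Polynomial k) % h2) := by
    rw [mod_X_pow_add hd hd0 f s, Polynomial.sum_def, fakeWeil_finset_sum]
    apply Finset.sum_congr rfl
    intro a _
    rw [fakeWeil_smul]
  have hfinal : fakeWeil q n (Polynomial.X ^ (f + s))
        - fakeWeil q n ((Polynomial.X ^ (f + s) : Polynomial k) % h2)
      = (monomial (expVec q n (f + s)) (1 : k) - mf * ms)
        + (mf - fakeWeil q n rf) * ms
        + ((∑ a ∈ rf.support, rf.coeff a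
            • (monomial (expVec q n a) (1 : k) * ms - monomial (expVec q n (a + s)) 1))
          + (∑ a ∈ rf.support, rf.coeff a
            • (monomial (expVec q n (a + s)) (1 : k)
                - fakeWeil q n ((Polynomial.X ^ (a + s) : Polynomial k) % h2)))) := by
    rw [fakeWeil_X_pow, hsum4, ← Finset.sum_add_distrib]
    have hterm : ∀ a ∈ rf.support,
        rf.coeff a • (monomial (expVec q n a) (1 : k) * ms - monomial (expVec q n (a + s)) 1)
          + rf.coeff a • (monomial (expVec q n (a + s)) (1 : k)
              - fakeWeil q n ((Polynomial.X ^ (a + s) : Polynomial k) % h2))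
        = rf.coeff a • (monomial (expVec q n a) (1 : k) * ms)
          - rf.coeff a • fakeWeil q n ((Polynomial.X ^ (a + s) : Polynomial k) % h2) := by
      intro a _
      rw [← smul_add, ← smul_sub]
      congr 1
      ring
    rw [Finset.sum_congr rfl hterm, Finset.sum_sub_distrib, hsum3]
    ring
  rw [hfinal]
  exact Submodule.add_mem _ (Submodule.add_mem _ hA1 hA2) (Submodule.add_mem _ hA3 hA4)

end main

section mainproof
variable {k : Type*} [Field k] [DecidableEq k]

lemma main (q n : ℕ) (hq : 2 ≤ q) [NeZero n] (F : Finset (Polynomial k))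
    (h2 : Polynomial k) (d : ℕ) (hd : h2.natDegree = d) (hd0 : 0 < d)
    (hbar : fakeWeil q n h2 ∈
      Vspace (fakeWeilSystem q n F) ((q - 1) * (Nat.clog q d + 1) + 1)) :
    ∀ e : ℕ, fakeWeil q n (Polynomial.X ^ e)
        - fakeWeil q n ((Polynomial.X ^ e : Polynomial k) % h2)
      ∈ Vspace (fakeWeilSystem q n F)
          (max (wNat q e) ((q - 1) * (Nat.clog q d + 1) + 1)) := by
  have hn : n ≠ 0 := NeZero.ne n
  have hq0 : 0 < q := by omega
  obtain ⟨c, hc⟩ : ∃ c, c = Nat.clog q d := ⟨_, rfl⟩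
  obtain ⟨u, hu⟩ : ∃ u, u = (q - 1) * (c + 1) + 1 := ⟨_, rfl⟩
  rw [← hc] at hbar ⊢
  rw [← hu] at hbar ⊢
  have hu2 : (q - 1) * c + q = u := by
    have h1 : (q - 1) * (c + 1) = (q - 1) * c + (q - 1) := by ring
    omega
  have hdle : d ≤ q ^ c := by rw [hc]; exact Nat.le_pow_clog (by omega) d
  have hWa : ∀ a, a < d → wNat q a ≤ (q - 1) * c :=
    fun a ha => wNat_lt_pow hq c a (lt_of_lt_of_le ha hdle)
  have hdva : ∀ a, degB (expVec q n a) ≤ wNat q a := fun a => degB_expVec_le hq hn a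
  intro e
  induction e using Nat.strong_induction_on with
  | _ e IH =>
  rcases lt_trichotomy e d with hlt | heq | hgt
  · rw [mod_X_pow_of_lt hd hd0 hlt, sub_self]
    exact Submodule.zero_mem _
  · subst heq
    rw [mod_X_pow_d hd hd0, fakeWeil_sub]
    have heq2 : fakeWeil q n (Polynomial.X ^ e)
        - (fakeWeil q n (Polynomial.X ^ e)
            - fakeWeil q n (Polynomial.C h2.leadingCoeff⁻¹ * h2))
        = fakeWeil q n (Polynomial.C h2.leadingCoeff⁻¹ * h2) := by ring
    rw [heq2, ← Polynomial.smul_eq_C_mul, fakeWeil_smul]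
    apply Submodule.smul_mem
    exact Vspace_mono (le_max_right _ _) hbar
  · rcases Nat.lt_or_ge e (q ^ (c + 1)) with hsmall | hbig
    · -- CASE A : f = e - 1, s = 1
      have hwb : ∀ b, b < q ^ (c + 1) → wNat q b ≤ (q - 1) * (c + 1) :=
        fun b hb => wNat_lt_pow hq (c + 1) b hb
      have hw1 : wNat q 1 = 1 := wNat_one hq
      have hstep := step q n hq F h2 d hd hd0 (max (wNat q e) u) (e - 1) 1 ?_ ?_ ?_ ?_
      · rwa [Nat.sub_add_cancel (by omega)] at hstep
      · have h1 := IH (e - 1) (by omega)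
        refine Vspace_mono ?_ h1
        have h2' : wNat q (e - 1) ≤ (q - 1) * (c + 1) := hwb _ (by omega)
        have h3 : (q - 1) * (c + 1) + 1 = u := by omega
        omega
      · have h1 := hdva (e - 1)
        have h2' := hdva 1
        have h4 : wNat q (e - 1) ≤ (q - 1) * (c + 1) := hwb _ (by omega)
        have h5 : (q - 1) * (c + 1) + 1 = u := by omega
        omega
      · intro a ha
        have haD := mod_support_lt hd hd0 _ ha
        have h1 := hdva a
        have h2' := hdva 1
        have h4 := hWa a haD
        omega
      · intro a ha
        have haD := mod_support_lt hd hd0 _ ha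
        have h1 := IH (a + 1) (by omega)
        refine Vspace_mono ?_ h1
        have h4 := hWa a haD
        have h5 := wNat_add hq a 1
        omega
    · -- e ≥ q^(c+1)
      obtain ⟨T, hT⟩ : ∃ T, T = Nat.log q e := ⟨_, rfl⟩
      have he0 : e ≠ 0 := by omega
      have hTe : q ^ T ≤ e := by rw [hT]; exact Nat.pow_log_le_self q he0
      have heT : e < q ^ (T + 1) := by rw [hT]; exact Nat.lt_pow_succ_log_self (by omega) e
      have hcT : c + 1 ≤ T := by
        rw [hT]
        exact (Nat.le_log_iff_pow_le (by omega) he0).2 hbig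
      have hqcT : q ^ c ≤ q ^ T := Nat.pow_le_pow_right (by omega) (by omega)
      by_cases hpow : e = q ^ T
      · -- CASE C : f = q^(T-1), s = (q-1) * q^(T-1)
        have hT1 : 1 ≤ T := by omega
        have hfs : q ^ (T - 1) + (q - 1) * q ^ (T - 1) = e := by
          have hf : q ^ (T - 1) * q = q ^ T := by
            rw [← pow_succ]
            congr 1
            omega
          have h9 : 1 + (q - 1) = q := by omega
          have h10 : q ^ (T - 1) + (q - 1) * q ^ (T - 1) = (1 + (q - 1)) * q ^ (T - 1) := by
            ring
          rw [hpow, h10, h9, ← hf]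
          ring
        have hwf : wNat q (q ^ (T - 1)) = 1 := wNat_pow hq _
        have hws : wNat q ((q - 1) * q ^ (T - 1)) = q - 1 := by
          rw [wNat_mul_pow hq, wNat_rec hq, Nat.mod_eq_of_lt (by omega),
              Nat.div_eq_of_lt (by omega), wNat_zero]
          omega
        have hqcT1 : q ^ c ≤ q ^ (T - 1) := Nat.pow_le_pow_right (by omega) (by omega)
        have hflt : q ^ (T - 1) < e := by
          have h5 : q ^ (T - 1) < q ^ T := Nat.pow_lt_pow_right (by omega) (by omega)
          omega
        have hstep := step q n hq F h2 d hd hd0 (max (wNat q e) u)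
          (q ^ (T - 1)) ((q - 1) * q ^ (T - 1)) ?_ ?_ ?_ ?_
        · rwa [hfs] at hstep
        · have h1 := IH (q ^ (T - 1)) hflt
          refine Vspace_mono ?_ h1
          omega
        · have h1 := hdva (q ^ (T - 1))
          have h2' := hdva ((q - 1) * q ^ (T - 1))
          omega
        · intro a ha
          have haD := mod_support_lt hd hd0 _ ha
          have h1 := hdva a
          have h2' := hdva ((q - 1) * q ^ (T - 1))
          have h4 := hWa a haD
          omega
        · intro a ha
          have haD := mod_support_lt hd hd0 _ ha
          have h1 := IH (a + (q - 1) * q ^ (T - 1)) (by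
            have h5 : a < q ^ (T - 1) := lt_of_lt_of_le haD (le_trans hdle hqcT1)
            omega)
          refine Vspace_mono ?_ h1
          have h5 := wNat_add hq a ((q - 1) * q ^ (T - 1))
          have h4 := hWa a haD
          omega
      · -- CASE B : find a digit j of e with e - q^j ≥ q^T ≥ d
        obtain ⟨j, hdig, hge⟩ : ∃ j, e / q ^ j % q ≠ 0 ∧ q ^ T ≤ e - q ^ j := by
          by_cases hmod : e % q ^ T = 0
          · have hdiv : q ^ T ∣ e := Nat.dvd_of_mod_eq_zero hmod
            have h1 : e / q ^ T * q ^ T = e := Nat.div_mul_cancel hdiv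
            have h5 : e / q ^ T < q := by
              rw [Nat.div_lt_iff_lt_mul (pow_pos hq0 T)]
              have h6 : q ^ (T + 1) = q ^ T * q := pow_succ q T
              have h7 : q * q ^ T = q ^ T * q := Nat.mul_comm _ _
              omega
            have h2' : 2 ≤ e / q ^ T := by
              rcases Nat.lt_or_ge (e / q ^ T) 2 with h | h
              · exfalso
                have h3 : 1 ≤ e / q ^ T := (Nat.one_le_div_iff (pow_pos hq0 T)).2 hTe
                have h4 : e / q ^ T = 1 := by omega
                rw [h4, one_mul] at h1
                exact hpow h1.symm
              · exact h
            refine ⟨T, ?_, ?_⟩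
            · rw [Nat.mod_eq_of_lt h5]
              omega
            · have h8 : 2 * q ^ T ≤ e / q ^ T * q ^ T :=
                Nat.mul_le_mul_right _ h2'
              omega
          · obtain ⟨j, hj⟩ : ∃ j, j = Nat.findGreatest (fun m => q ^ m ∣ e) T := ⟨_, rfl⟩
            have hjd : q ^ j ∣ e := by
              rw [hj]
              exact Nat.findGreatest_spec (P := fun m => q ^ m ∣ e) (Nat.zero_le T) (by simp)
            have hjle : j ≤ T := by rw [hj]; exact Nat.findGreatest_le T
            have hjlt : j < T := by
              rcases Nat.lt_or_ge j T with h | h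
              · exact h
              · exfalso
                have hjT : j = T := by omega
                rw [hjT] at hjd
                exact hmod (Nat.dvd_iff_mod_eq_zero.1 hjd)
            have hnd : ¬ q ^ (j + 1) ∣ e := by
              intro hcon
              have h7 : j + 1 ≤ Nat.findGreatest (fun m => q ^ m ∣ e) T :=
                Nat.le_findGreatest (by omega) hcon
              omega
            refine ⟨j, ?_, ?_⟩
            · intro h0
              apply hnd
              have hq' : q ∣ e / q ^ j := Nat.dvd_of_mod_eq_zero h0
              obtain ⟨t, ht⟩ := hjd
              obtain ⟨v, hv⟩ := hq'
              have ht' : e / q ^ j = t := by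
                rw [ht]
                exact Nat.mul_div_cancel_left t (pow_pos hq0 j)
              have htv : t = q * v := by omega
              exact ⟨v, by rw [ht, htv, pow_succ]; ring⟩
            · have hL : q ^ j ∣ e % q ^ T :=
                (Nat.dvd_mod_iff (pow_dvd_pow q (le_of_lt hjlt))).2 hjd
              have hL1 : q ^ j ≤ e % q ^ T := Nat.le_of_dvd (Nat.pos_of_ne_zero hmod) hL
              have h1 := Nat.div_add_mod e (q ^ T)
              have h2' : 1 ≤ e / q ^ T := (Nat.one_le_div_iff (pow_pos hq0 T)).2 hTe
              have h3 : q ^ T * 1 ≤ q ^ T * (e / q ^ T) := Nat.mul_le_mul_left _ h2'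
              omega
        have hqje : q ^ j ≤ e := by
          have h2' : 1 ≤ e / q ^ j :=
            Nat.pos_of_ne_zero (fun h => by rw [h] at hdig; simp at hdig)
          have h3 : q ^ j * 1 ≤ q ^ j * (e / q ^ j) := Nat.mul_le_mul_left _ h2'
          have h4 := Nat.div_add_mod e (q ^ j)
          omega
        have hwe := wNat_digit hq hdig
        have hdf : d ≤ e - q ^ j := le_trans (le_trans hdle hqcT) hge
        have hstep := step q n hq F h2 d hd hd0 (max (wNat q e) u) (e - q ^ j) (q ^ j)
          ?_ ?_ ?_ ?_
        · rwa [Nat.sub_add_cancel hqje] at hstep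
        · have h1 := IH (e - q ^ j) (by have := pow_pos hq0 j; omega)
          refine Vspace_mono ?_ h1
          omega
        · have h1 := hdva (e - q ^ j)
          have h2' := hdva (q ^ j)
          have h3 := wNat_pow hq j
          omega
        · intro a ha
          have haD := mod_support_lt hd hd0 _ ha
          have h1 := hdva a
          have h2' := hdva (q ^ j)
          have h3 := wNat_pow hq j
          have h4 := hWa a haD
          omega
        · intro a ha
          have haD := mod_support_lt hd hd0 _ ha
          have h1 := IH (a + q ^ j) (by omega)
          refine Vspace_mono ?_ h1
          have h5 := wNat_add hq a (q ^ j)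
          have h3 := wNat_pow hq j
          have h4 := hWa a haD
          omega

end mainproof

end FWP

/-- If `overline{h_2} ∈ V_{E,u}` with `u = (q-1)⌈log_q d + 1⌉ + 1` and
`r_e = X^e mod h_2`, then `overline{X^e} - overline{r_e} ∈ V_{E, max(w(e), u)}` for all `e`;
in particular if `w(e) ≤ u` then `overline{X^e} - overline{r_e} ∈ V_{E,u}`. -/
theorem fakeWeil_pow_mod_mem_Vspace {k : Type*} [Field k] [Fintype k] [DecidableEq k]
    (q n : ℕ) (hq : IsPrimePow q) [NeZero n] (hcard : Fintype.card k = q ^ n)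
    (F : Finset (Polynomial k)) (h2 : Polynomial k)
    (d : ℕ) (hd : h2.natDegree = d) (hd0 : 0 < d)
    (hbar : fakeWeil q n h2 ∈
      Vspace (fakeWeilSystem q n F) ((q - 1) * (Nat.clog q d + 1) + 1)) :
    ∀ e : ℕ,
      (fakeWeil q n (Polynomial.X ^ e : Polynomial k) -
          fakeWeil q n ((Polynomial.X ^ e : Polynomial k) % h2) ∈
        Vspace (fakeWeilSystem q n F)
          (max (wNat q e) ((q - 1) * (Nat.clog q d + 1) + 1))) ∧
      (wNat q e ≤ (q - 1) * (Nat.clog q d + 1) + 1 →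
        fakeWeil q n (Polynomial.X ^ e : Polynomial k) -
            fakeWeil q n ((Polynomial.X ^ e : Polynomial k) % h2) ∈
          Vspace (fakeWeilSystem q n F) ((q - 1) * (Nat.clog q d + 1) + 1)) := by
  
  intro e
  have h1 := FWP.main q n hq.two_le F h2 d hd hd0 hbar e
  refine ⟨h1, fun hw => ?_⟩
  rwa [max_eq_right hw] at h1
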